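/- Let a ≤ 0 and b ≥ 0 be real numbers, at least one of which is nonzero. Then for every connected simple graph G on n ≥ 2 vertices, Gut_{a,b}(G) ≥ n(n−1)^{2a+1}/2, and equality holds if and only if G is isomorphic to the complete graph K_n. -/
import Mathlib


open scoped Classical

/-- The general Gutman index `Gut_{a,b}(G)`: the sum, over all unordered pairs of
distinct vertices `{u, v}`, of `(d(u)·d(v))^a · (dist(u,v))^b` (real powers). -/
noncomputable def gut {V : Type*} [Fintype V] (G : SimpleGraph V) (a b : ℝ) : ℝ :=
  ∑ e ∈ Finset.univ.filter (fun e : Sym2 V => ¬ e.IsDiag),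
    Sym2.lift ⟨fun u v =>
      ((G.degree u : ℝ) * (G.degree v : ℝ)) ^ a * ((G.dist u v : ℝ)) ^ b,
      fun u v => by
        show ((G.degree u : ℝ) * (G.degree v : ℝ)) ^ a * ((G.dist u v : ℝ)) ^ b
            = ((G.degree v : ℝ) * (G.degree u : ℝ)) ^ a * ((G.dist v u : ℝ)) ^ b
        rw [mul_comm ((G.degree u : ℝ)), SimpleGraph.dist_comm]⟩ e

theorem stmt6 {V : Type*} [Fintype V] (G : SimpleGraph V) (n : ℕ)
    (hn : n = Fintype.card V) (hn2 : 2 ≤ n) (hG : G.Connected)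
    (a b : ℝ) (ha : a ≤ 0) (hb : 0 ≤ b) (hab : a ≠ 0 ∨ b ≠ 0) :
    (n : ℝ) * ((n : ℝ) - 1) ^ (2 * a + 1) / 2 ≤ gut G a b ∧
    (gut G a b = (n : ℝ) * ((n : ℝ) - 1) ^ (2 * a + 1) / 2 ↔
      Nonempty (G ≃g (⊤ : SimpleGraph (Fin n)))) := by
  classical
  have hcardV : 2 ≤ Fintype.card V := hn ▸ hn2
  have hnR : (2:ℝ) ≤ (n:ℝ) := by exact_mod_cast hn2
  have hn1 : (1:ℝ) ≤ (n:ℝ) - 1 := by linarith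
  have hn1pos : (0:ℝ) < (n:ℝ) - 1 := by linarith
  -- degree bounds
  have hdegle : ∀ u : V, (G.degree u : ℝ) ≤ (n:ℝ) - 1 := by
    intro u
    have h := G.degree_lt_card_verts u
    rw [← hn] at h
    have h2 : G.degree u + 1 ≤ n := h
    have : (G.degree u : ℝ) + 1 ≤ (n:ℝ) := by exact_mod_cast h2
    linarith
  have hdegpos : ∀ u : V, (0:ℝ) < (G.degree u : ℝ) := by
    intro u
    have h0 : 0 < G.degree u := by
      obtain ⟨v, hv⟩ := Fintype.exists_ne_of_one_lt_card (by omega) u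
      obtain ⟨w⟩ := hG u v
      exact (G.degree_pos_iff_exists_adj u).mpr
        ⟨_, w.adj_snd (SimpleGraph.Walk.not_nil_of_ne (Ne.symm hv))⟩
    exact_mod_cast h0
  set c : ℝ := (((n:ℝ) - 1) * ((n:ℝ) - 1)) ^ a with hc
  have cpos : 0 < c := Real.rpow_pos_of_pos (mul_pos hn1pos hn1pos) a
  set s : Finset (Sym2 V) := Finset.univ.filter (fun e : Sym2 V => ¬ e.IsDiag) with hs
  set f : Sym2 V → ℝ := fun e => Sym2.lift ⟨fun u v =>
      ((G.degree u : ℝ) * (G.degree v : ℝ)) ^ a * ((G.dist u v : ℝ)) ^ b,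
      fun u v => by
        show ((G.degree u : ℝ) * (G.degree v : ℝ)) ^ a * ((G.dist u v : ℝ)) ^ b
            = ((G.degree v : ℝ) * (G.degree u : ℝ)) ^ a * ((G.dist v u : ℝ)) ^ b
        rw [mul_comm ((G.degree u : ℝ)), SimpleGraph.dist_comm]⟩ e with hf
  have hgut : gut G a b = ∑ e ∈ s, f e := rfl
  have hmem : ∀ u v : V, u ≠ v → s(u, v) ∈ s := by
    intro u v huv
    simp [hs, Sym2.mk_isDiag_iff, huv]
  have hfval : ∀ u v : V, f s(u, v)
      = ((G.degree u : ℝ) * (G.degree v : ℝ)) ^ a * ((G.dist u v : ℝ)) ^ b := by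
    intro u v; simp [hf]
  -- per-pair bounds
  have hP : ∀ u v : V, c ≤ ((G.degree u : ℝ) * (G.degree v : ℝ)) ^ a := by
    intro u v
    exact Real.rpow_le_rpow_of_nonpos (mul_pos (hdegpos u) (hdegpos v))
      (mul_le_mul (hdegle u) (hdegle v) (hdegpos v).le hn1pos.le) ha
  have hQ : ∀ u v : V, u ≠ v → (1:ℝ) ≤ ((G.dist u v : ℝ)) ^ b := by
    intro u v huv
    have h1 : (1:ℝ) ≤ (G.dist u v : ℝ) := by
      exact_mod_cast hG.pos_dist_of_ne huv
    calc (1:ℝ) = (1:ℝ) ^ b := (Real.one_rpow b).symm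
      _ ≤ ((G.dist u v : ℝ)) ^ b := Real.rpow_le_rpow zero_le_one h1 hb
  have hterm : ∀ u v : V, u ≠ v → c ≤ f s(u, v) := by
    intro u v huv
    rw [hfval]
    have h1 := hP u v
    have h2 := hQ u v huv
    nlinarith [cpos]
  have hle : ∀ e ∈ s, c ≤ f e := by
    intro e he
    induction e using Sym2.ind with
    | _ u v => exact hterm u v (by simpa [hs, Sym2.mk_isDiag_iff] using he)
  -- cardinality of s
  have hcard_s : s.card = n.choose 2 := by
    have h1 : Fintype.card {e : Sym2 V // ¬ e.IsDiag} = (Fintype.card V).choose 2 :=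
      Sym2.card_subtype_not_diag
    rw [Fintype.card_subtype] at h1
    rw [hs, h1, ← hn]
  -- the bound equals s.card • c
  have hbound : (n : ℝ) * ((n : ℝ) - 1) ^ (2 * a + 1) / 2 = (s.card : ℝ) * c := by
    have hsplit : ((n:ℝ) - 1) ^ (2 * a + 1) = c * ((n:ℝ) - 1) := by
      rw [hc, show (2:ℝ) * a + 1 = a + (a + 1) by ring, Real.rpow_add hn1pos,
        Real.rpow_add hn1pos, Real.rpow_one,
        Real.mul_rpow hn1pos.le hn1pos.le]
      ring
    rw [hcard_s, hsplit, Nat.cast_choose_two]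
    ring
  -- completeness implies each term equals c
  have hdeg_of_all : (∀ u v : V, u ≠ v → G.Adj u v) → ∀ u : V, (G.degree u : ℝ) = (n:ℝ) - 1 := by
    intro hall u
    have hset : G.neighborFinset u = Finset.univ.erase u := by
      ext w
      simp only [SimpleGraph.mem_neighborFinset, Finset.mem_erase, Finset.mem_univ, and_true]
      constructor
      · intro h; exact (G.ne_of_adj h).symm
      · intro h; exact hall u w (Ne.symm h)
    have : G.degree u = Fintype.card V - 1 := by
      rw [SimpleGraph.degree, hset, Finset.card_erase_of_mem (Finset.mem_univ u),
        Finset.card_univ]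
    rw [this, ← hn]
    push_cast [Nat.cast_sub (by omega : 1 ≤ n)]
    ring
  have hsum_of_all : (∀ u v : V, u ≠ v → G.Adj u v) →
      gut G a b = (n : ℝ) * ((n : ℝ) - 1) ^ (2 * a + 1) / 2 := by
    intro hall
    have hterm_eq : ∀ e ∈ s, f e = c := by
      intro e he
      induction e using Sym2.ind with
      | _ u v =>
        have huv : u ≠ v := by
          simpa [hs, Sym2.mk_isDiag_iff] using he
        have hd1 : G.dist u v = 1 := SimpleGraph.dist_eq_one_iff_adj.mpr (hall u v huv)
        rw [hfval, hdeg_of_all hall u, hdeg_of_all hall v, hd1]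
        simp [hc]
    rw [hgut, Finset.sum_congr rfl hterm_eq, Finset.sum_const, hbound, nsmul_eq_mul]
  -- each term equal to c forces adjacency
  have hadj_of_eq : ∀ u v : V, u ≠ v → f s(u, v) = c → G.Adj u v := by
    intro u v huv heq
    rw [hfval] at heq
    set P := ((G.degree u : ℝ) * (G.degree v : ℝ)) ^ a with hPdef
    set Q := ((G.dist u v : ℝ)) ^ b with hQdef
    have h1 : c ≤ P := hP u v
    have h2 : (1:ℝ) ≤ Q := hQ u v huv
    have hPc : P = c := by nlinarith [cpos]
    have hQ1 : Q = 1 := by nlinarith [cpos]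
    rcases hab with hane | hbne
    · -- a < 0 : degrees forced to be n - 1
      have halt : a < 0 := lt_of_le_of_ne ha hane
      have hprod : (G.degree u : ℝ) * (G.degree v : ℝ) = ((n:ℝ) - 1) * ((n:ℝ) - 1) := by
        by_contra hne
        have hlt : (G.degree u : ℝ) * (G.degree v : ℝ) < ((n:ℝ) - 1) * ((n:ℝ) - 1) :=
          lt_of_le_of_ne (mul_le_mul (hdegle u) (hdegle v) (hdegpos v).le hn1pos.le) hne
        have := Real.rpow_lt_rpow_of_neg (mul_pos (hdegpos u) (hdegpos v)) hlt halt
        rw [← hPdef, ← hc] at this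
        linarith [hPc ▸ this]
      have hdu : (G.degree u : ℝ) = (n:ℝ) - 1 := by
        have h3 := hdegle u
        have h4 := hdegle v
        have h5 := hdegpos u
        have h6 := hdegpos v
        nlinarith
      -- degree u = n - 1 forces u adjacent to every other vertex
      have hdu' : G.degree u = Fintype.card V - 1 := by
        have : (G.degree u : ℝ) = ((Fintype.card V - 1 : ℕ) : ℝ) := by
          rw [hdu, ← hn]
          push_cast [Nat.cast_sub (by omega : 1 ≤ n)]
          ring
        exact_mod_cast this
      have hset : G.neighborFinset u = Finset.univ.erase u := by
        apply Finset.eq_of_subset_of_card_le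
        · intro w hw
          rw [SimpleGraph.mem_neighborFinset] at hw
          exact Finset.mem_erase.mpr ⟨(G.ne_of_adj hw).symm, Finset.mem_univ w⟩
        · rw [Finset.card_erase_of_mem (Finset.mem_univ u), Finset.card_univ,
            ← SimpleGraph.degree, hdu']
      have : v ∈ G.neighborFinset u := by
        rw [hset]
        exact Finset.mem_erase.mpr ⟨Ne.symm huv, Finset.mem_univ v⟩
      exact (SimpleGraph.mem_neighborFinset G u v).mp this
    · -- b > 0 : distance forced to be 1
      have hbpos : 0 < b := lt_of_le_of_ne hb (Ne.symm hbne)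
      have hdist1 : G.dist u v = 1 := by
        by_contra hne1
        have hge1 : 1 ≤ G.dist u v := hG.pos_dist_of_ne huv
        have hge2 : 2 ≤ G.dist u v := by omega
        have h1lt : (1:ℝ) < (G.dist u v : ℝ) := by
          have : (2:ℝ) ≤ (G.dist u v : ℝ) := by exact_mod_cast hge2
          linarith
        have := Real.rpow_lt_rpow zero_le_one h1lt hbpos
        rw [Real.one_rpow, ← hQdef] at this
        linarith [hQ1 ▸ this]
      exact SimpleGraph.dist_eq_one_iff_adj.mp hdist1
  -- main lower bound
  have hlb : (n : ℝ) * ((n : ℝ) - 1) ^ (2 * a + 1) / 2 ≤ gut G a b := by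
    rw [hbound, hgut]
    have := Finset.card_nsmul_le_sum s f c hle
    rwa [nsmul_eq_mul] at this
  refine ⟨hlb, ?_, ?_⟩
  · -- equality implies completeness
    intro heq
    have hall : ∀ u v : V, u ≠ v → G.Adj u v := by
      have hterm_all : ∀ e ∈ s, f e = c := by
        by_contra hcon
        push_neg at hcon
        obtain ⟨e, he, hene⟩ := hcon
        have helt : c < f e := lt_of_le_of_ne (hle e he) (Ne.symm hene)
        have hstrict : ∑ _e ∈ s, c < ∑ e ∈ s, f e := by
          exact Finset.sum_lt_sum hle ⟨e, he, helt⟩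
        rw [Finset.sum_const, nsmul_eq_mul, ← hbound, ← hgut] at hstrict
        linarith [heq ▸ hstrict]
      intro u v huv
      exact hadj_of_eq u v huv (hterm_all _ (hmem u v huv))
    -- build the isomorphism
    have hGtop : G = ⊤ := by
      ext u v
      simp only [SimpleGraph.top_adj]
      exact ⟨fun h => G.ne_of_adj h, fun h => hall u v h⟩
    have e : V ≃ Fin n := Fintype.equivFinOfCardEq hn.symm
    exact ⟨hGtop ▸ SimpleGraph.Iso.completeGraph e⟩
  · -- completeness implies equality
    rintro ⟨φ⟩
    apply hsum_of_all
    intro u v huv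
    have hne : φ u ≠ φ v := fun h => huv (φ.injective h)
    exact φ.map_rel_iff.mp ((SimpleGraph.top_adj _ _).mpr hne)
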